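/- For integers m and t with t < m, there exists a set DC ⊆ [m] of size O(m/√t) such that for every i, j ∈ [m - t] there exists k ≤ t with both i + k ∈ DC and j + k ∈ DC. -/

import Mathlib

/-- For any positive `r` and any `x`, we can pad `x` by some `a < r` to a multiple of `r`. -/
lemma diffcover_exists_pad (r x : ℕ) (hr : 0 < r) : ∃ a < r, r ∣ x + a := by
  have h := Nat.div_add_mod x r
  have hm : x % r < r := Nat.mod_lt _ hr
  rcases Nat.eq_zero_or_pos (x % r) with h0 | h0
  · exact ⟨0, hr, by simpa using Nat.dvd_of_mod_eq_zero h0⟩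
  · refine ⟨r - x % r, by omega, x / r + 1, ?_⟩
    rw [Nat.mul_add, Nat.mul_one]
    omega

/-- Difference covers: there is a universal constant `C` such that for all
integers `t < m` there exists a set `DC ⊆ [m]` of size at most `C·m/√t`
such that for every `i, j ∈ [m - t]` there is a shift `k ≤ t` with both
`i + k ∈ DC` and `j + k ∈ DC`. -/
theorem difference_cover_exists :
    ∃ C : ℝ, 0 < C ∧ ∀ m t : ℕ, 0 < t → t < m →
      ∃ DC : Finset ℕ, DC ⊆ Finset.Icc 1 m ∧
        (DC.card : ℝ) ≤ C * m / Real.sqrt t ∧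
        ∀ i j, i ∈ Finset.Icc 1 (m - t) → j ∈ Finset.Icc 1 (m - t) →
          ∃ k ≤ t, i + k ∈ DC ∧ j + k ∈ DC := by
  refine ⟨6, by norm_num, ?_⟩
  intro m t ht htm
  set r := Nat.sqrt t with hrdef
  have hr0 : 0 < r := Nat.sqrt_pos.mpr ht
  set p := r * r with hpdef
  have hp0 : 0 < p := Nat.mul_pos hr0 hr0
  have hpt : p ≤ t := Nat.sqrt_le t
  have htlt : t < (r + 1) * (r + 1) := Nat.lt_succ_sqrt t
  refine ⟨(Finset.Icc 1 m).filter (fun x => x % p < r ∨ r ∣ x % p),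
    Finset.filter_subset _ _, ?_, ?_⟩
  · -- cardinality bound
    have hcard : ((Finset.Icc 1 m).filter (fun x => x % p < r ∨ r ∣ x % p)).card
        ≤ (m / p + 1) * (r + r) := by
      have hsub : ((Finset.Icc 1 m).filter (fun x => x % p < r ∨ r ∣ x % p)).card ≤
          ((Finset.range (m / p + 1)) ×ˢ
            ((Finset.range r) ∪ (Finset.range r).image (fun c => c * r))).card := by
        apply Finset.card_le_card_of_injOn (fun x => (x / p, x % p))
        · intro x hx
          simp only [Finset.mem_coe, Finset.mem_filter, Finset.mem_Icc] at hx
          obtain ⟨⟨hx1, hxm⟩, hxP⟩ := hx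
          have hdiv : x / p ≤ m / p := Nat.div_le_div_right hxm
          have hmod : x % p < p := Nat.mod_lt _ hp0
          simp only [Finset.mem_coe, Finset.mem_product, Finset.mem_range, Finset.mem_union,
            Finset.mem_image]
          refine ⟨by omega, ?_⟩
          rcases hxP with h | ⟨c, hc⟩
          · exact Or.inl h
          · refine Or.inr ⟨c, ?_, by rw [Nat.mul_comm]; omega⟩
            have hlt : r * c < r * r := by omega
            exact lt_of_mul_lt_mul_left hlt (Nat.zero_le r)
        · intro x hx y hy hxy
          have h1 := Nat.div_add_mod x p
          have h2 := Nat.div_add_mod y p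
          have e1 : x / p = y / p := congrArg Prod.fst hxy
          have e2 : x % p = y % p := congrArg Prod.snd hxy
          rw [e1, e2] at h1
          omega
      have hT : ((Finset.range (m / p + 1)) ×ˢ
          ((Finset.range r) ∪ (Finset.range r).image (fun c => c * r))).card
          ≤ (m / p + 1) * (r + r) := by
        rw [Finset.card_product, Finset.card_range]
        refine Nat.mul_le_mul_left _ ?_
        calc ((Finset.range r) ∪ (Finset.range r).image (fun c => c * r)).card
            ≤ (Finset.range r).card + ((Finset.range r).image (fun c => c * r)).card :=
              Finset.card_union_le _ _
          _ ≤ r + r := by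
              gcongr
              · exact (Finset.card_range r).le
              · exact (Finset.card_image_le).trans (Finset.card_range r).le
      omega
    -- now real arithmetic
    have hs0 : (0:ℝ) < Real.sqrt t := Real.sqrt_pos.mpr (by exact_mod_cast ht)
    rw [le_div_iff₀ hs0]
    have hcardR : (((Finset.Icc 1 m).filter (fun x => x % p < r ∨ r ∣ x % p)).card : ℝ)
        ≤ ((m / p : ℕ) + 1) * ((r:ℝ) + r) := by exact_mod_cast hcard
    have hq : ((m / p : ℕ) : ℝ) * ((r:ℝ) * r) ≤ (m : ℝ) := by
      have h := Nat.div_mul_le_self m p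
      calc ((m / p : ℕ) : ℝ) * ((r:ℝ) * r) = ((m / p * p : ℕ) : ℝ) := by
            push_cast [hpdef]; ring
        _ ≤ (m : ℝ) := by exact_mod_cast h
    have hR1 : (1:ℝ) ≤ (r:ℝ) := by exact_mod_cast hr0
    have hst1 : Real.sqrt t ≤ (r:ℝ) + 1 := by
      have h1 : (t:ℝ) ≤ ((r:ℝ) + 1)^2 := by
        have := htlt.le
        have h2 : (t:ℝ) ≤ ((r+1) * (r+1) : ℕ) := by exact_mod_cast this
        calc (t:ℝ) ≤ ((r+1) * (r+1) : ℕ) := h2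
          _ = ((r:ℝ)+1)^2 := by push_cast; ring
      calc Real.sqrt t ≤ Real.sqrt (((r:ℝ)+1)^2) := Real.sqrt_le_sqrt h1
        _ = (r:ℝ) + 1 := Real.sqrt_sq (by positivity)
    have hrs : (r:ℝ) ≤ Real.sqrt t := by
      have h1 : ((r:ℝ))^2 ≤ (t:ℝ) := by
        have : ((r*r : ℕ) : ℝ) ≤ (t:ℝ) := by exact_mod_cast hpt
        calc ((r:ℝ))^2 = ((r*r : ℕ) : ℝ) := by push_cast; ring
          _ ≤ (t:ℝ) := this
      calc (r:ℝ) = Real.sqrt (((r:ℝ))^2) := (Real.sqrt_sq (by positivity)).symm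
        _ ≤ Real.sqrt t := Real.sqrt_le_sqrt h1
    have hTT : Real.sqrt t * Real.sqrt t = (t:ℝ) := Real.mul_self_sqrt (by positivity)
    have hTM : (t:ℝ) ≤ (m:ℝ) := by exact_mod_cast htm.le
    have hq0 : (0:ℝ) ≤ ((m / p : ℕ) : ℝ) := by positivity
    calc (((Finset.Icc 1 m).filter (fun x => x % p < r ∨ r ∣ x % p)).card : ℝ) * Real.sqrt t
        ≤ (((m / p : ℕ) : ℝ) + 1) * ((r:ℝ) + r) * Real.sqrt t := by
          exact mul_le_mul_of_nonneg_right hcardR hs0.le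
      _ ≤ 6 * (m:ℝ) := by
          nlinarith [mul_le_mul_of_nonneg_left hst1 (mul_nonneg hq0 (by positivity : (0:ℝ) ≤ (r:ℝ))),
            mul_le_mul_of_nonneg_right hrs hs0.le,
            mul_le_mul_of_nonneg_left hR1 (mul_nonneg hq0 (by positivity : (0:ℝ) ≤ (r:ℝ)))]
  · -- covering property
    intro i j hi hj
    simp only [Finset.mem_Icc] at hi hj
    obtain ⟨k0, hk0r, hk0d⟩ := diffcover_exists_pad r i hr0
    set b := (j + k0) / r with hbdef
    set s := (j + k0) % r with hsdef
    have hsr : s < r := Nat.mod_lt _ hr0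
    have hjb : r * b + s = j + k0 := Nat.div_add_mod (j + k0) r
    obtain ⟨a, har, c, hc⟩ := diffcover_exists_pad r b hr0
    have hkt : k0 + a * r ≤ t := by
      have h1 : (a + 1) * r ≤ r * r := Nat.mul_le_mul_right r har
      have h2 : (a + 1) * r = a * r + r := by ring
      omega
    refine ⟨k0 + a * r, hkt, ?_, ?_⟩
    · -- i + k ∈ DC
      simp only [Finset.mem_filter, Finset.mem_Icc]
      refine ⟨⟨by omega, by omega⟩, Or.inr ?_⟩
      rw [Nat.dvd_mod_iff (Dvd.intro r rfl)]
      have he : i + (k0 + a * r) = (i + k0) + a * r := by ring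
      rw [he]
      exact dvd_add hk0d (Dvd.intro_left a rfl)
    · -- j + k ∈ DC
      simp only [Finset.mem_filter, Finset.mem_Icc]
      refine ⟨⟨by omega, by omega⟩, Or.inl ?_⟩
      have hjk : j + (k0 + a * r) = p * c + s := by
        have h1 : j + (k0 + a * r) = r * b + s + a * r := by omega
        rw [h1, hpdef]
        have h2 : r * b + a * r = r * (b + a) := by ring
        calc r * b + s + a * r = r * (b + a) + s := by omega
          _ = r * (r * c) + s := by rw [← hc]
          _ = r * r * c + s := by ring
      have hsp : s < p := lt_of_lt_of_le hsr (by rw [hpdef]; exact Nat.le_mul_of_pos_left r hr0)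
      rw [hjk, Nat.mul_add_mod, Nat.mod_eq_of_lt hsp]
      exact hsr
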